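/- Let A be a Banach algebra and suppose T, T′: A → A both satisfy the cubic functional equation T(2x+y)+T(2x−y)=2T(x+y)+2T(x−y)+12T(x), and suppose there is a map f: A → A and a function Ψ: A → ℝ≥0 with Ψ(x) = Σ_{i=0}^∞ φ₂(2ⁱx,0)/2^{3i} (convergent) such that ‖T(x) − f(x)‖ ≤ (1/16)Ψ(x) and ‖T′(x) − f(x)‖ ≤ (1/16)Ψ(x) for all x. Then T = T′. -/

import Mathlib

private lemma cubic_double {A : Type*} [NormedRing A] [NormedAlgebra ℝ A]
    (T : A → A)
    (hT : ∀ x y : A, T ((2:ℝ) • x + y) + T ((2:ℝ) • x - y)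
      = (2:ℝ) • T (x + y) + (2:ℝ) • T (x - y) + (12:ℝ) • T x) :
    ∀ (n : ℕ) (x : A), T ((2:ℝ) ^ n • x) = (8:ℝ) ^ n • T x := by
  have key : ∀ x : A, T ((2:ℝ) • x) = (8:ℝ) • T x := by
    intro x
    have h := hT x 0
    simp only [add_zero, sub_zero] at h
    have h2 : (2:ℝ) • T ((2:ℝ) • x) = (16:ℝ) • T x := by
      rw [two_smul, h]
      rw [← add_smul, ← add_smul]; norm_num
    calc T ((2:ℝ) • x) = (1/2 : ℝ) • ((2:ℝ) • T ((2:ℝ) • x)) := by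
            rw [smul_smul]; norm_num
      _ = (1/2 : ℝ) • ((16:ℝ) • T x) := by rw [h2]
      _ = (8:ℝ) • T x := by rw [smul_smul]; norm_num
  intro n
  induction n with
  | zero => intro x; simp
  | succ n ih =>
      intro x
      have : (2:ℝ) ^ (n + 1) • x = (2:ℝ) ^ n • ((2:ℝ) • x) := by
        rw [smul_smul, ← pow_succ]
      rw [this, ih, key, smul_smul, pow_succ]

theorem cubic_approximant_unique
    {A : Type*} [NormedRing A] [NormedAlgebra ℝ A] [CompleteSpace A]
    (T T' f : A → A) (φ₂ : A → A → ℝ) (hφ₂ : ∀ x y, 0 ≤ φ₂ x y)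
    (hsum : ∀ x : A, Summable (fun i : ℕ => φ₂ ((2:ℝ) ^ i • x) 0 / 2 ^ (3 * i)))
    (hT : ∀ x y : A, T ((2:ℝ) • x + y) + T ((2:ℝ) • x - y)
      = (2:ℝ) • T (x + y) + (2:ℝ) • T (x - y) + (12:ℝ) • T x)
    (hT' : ∀ x y : A, T' ((2:ℝ) • x + y) + T' ((2:ℝ) • x - y)
      = (2:ℝ) • T' (x + y) + (2:ℝ) • T' (x - y) + (12:ℝ) • T' x)
    (hbT : ∀ x : A, ‖T x - f x‖ ≤ (1 / 16) * ∑' i : ℕ, φ₂ ((2:ℝ) ^ i • x) 0 / 2 ^ (3 * i))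
    (hbT' : ∀ x : A, ‖T' x - f x‖ ≤ (1 / 16) * ∑' i : ℕ, φ₂ ((2:ℝ) ^ i • x) 0 / 2 ^ (3 * i)) :
    T = T' := by
  funext x
  set g : ℕ → ℝ := fun i => φ₂ ((2:ℝ) ^ i • x) 0 / 2 ^ (3 * i) with hg
  have hgs : Summable g := hsum x
  -- Ψ(2^n x) = 8^n * tail sum
  have hΨ : ∀ n : ℕ, (∑' i : ℕ, φ₂ ((2:ℝ) ^ i • ((2:ℝ) ^ n • x)) 0 / 2 ^ (3 * i))
      = (8:ℝ) ^ n * ∑' i : ℕ, g (i + n) := by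
    intro n
    rw [← tsum_mul_left]
    congr 1
    funext i
    have hx : (2:ℝ) ^ i • ((2:ℝ) ^ n • x) = (2:ℝ) ^ (i + n) • x := by
      rw [smul_smul, ← pow_add]
    rw [hx]
    simp only [hg]
    have h8 : (8:ℝ) ^ n = 2 ^ (3 * n) := by
      rw [pow_mul]; norm_num
    rw [h8, Nat.mul_add]
    field_simp
    rw [pow_add]
    ring
  -- main bound
  have hbound : ∀ n : ℕ, ‖T x - T' x‖ ≤ (1/8 : ℝ) * ∑' i : ℕ, g (i + n) := by
    intro n
    have hTx := cubic_double T hT n x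
    have hT'x := cubic_double T' hT' n x
    have h1 := hbT ((2:ℝ) ^ n • x)
    have h2 := hbT' ((2:ℝ) ^ n • x)
    rw [hΨ n] at h1 h2
    have hdist : ‖T ((2:ℝ) ^ n • x) - T' ((2:ℝ) ^ n • x)‖
        ≤ (1/8 : ℝ) * ((8:ℝ) ^ n * ∑' i : ℕ, g (i + n)) := by
      calc ‖T ((2:ℝ) ^ n • x) - T' ((2:ℝ) ^ n • x)‖
          ≤ ‖T ((2:ℝ) ^ n • x) - f ((2:ℝ) ^ n • x)‖
            + ‖T' ((2:ℝ) ^ n • x) - f ((2:ℝ) ^ n • x)‖ := by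
              rw [← norm_neg (T' _ - f _)]
              have hna := norm_add_le (T ((2:ℝ) ^ n • x) - f ((2:ℝ) ^ n • x))
                (-(T' ((2:ℝ) ^ n • x) - f ((2:ℝ) ^ n • x)))
              rwa [show T ((2:ℝ) ^ n • x) - f ((2:ℝ) ^ n • x)
                + -(T' ((2:ℝ) ^ n • x) - f ((2:ℝ) ^ n • x))
                = T ((2:ℝ) ^ n • x) - T' ((2:ℝ) ^ n • x) by abel] at hna
        _ ≤ (1/16) * ((8:ℝ) ^ n * ∑' i : ℕ, g (i + n))
            + (1/16) * ((8:ℝ) ^ n * ∑' i : ℕ, g (i + n)) := add_le_add h1 h2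
        _ = (1/8 : ℝ) * ((8:ℝ) ^ n * ∑' i : ℕ, g (i + n)) := by ring
    rw [hTx, hT'x, ← smul_sub, norm_smul] at hdist
    have h8pos : (0:ℝ) < 8 ^ n := by positivity
    have : ‖(8:ℝ) ^ n‖ = (8:ℝ) ^ n := by
      rw [Real.norm_eq_abs, abs_of_pos h8pos]
    rw [this] at hdist
    calc ‖T x - T' x‖ = ((8:ℝ)^n)⁻¹ * ((8:ℝ)^n * ‖T x - T' x‖) := by
            field_simp
      _ ≤ ((8:ℝ)^n)⁻¹ * ((1/8 : ℝ) * ((8:ℝ) ^ n * ∑' i : ℕ, g (i + n))) := by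
            apply mul_le_mul_of_nonneg_left hdist (by positivity)
      _ = (1/8 : ℝ) * ∑' i : ℕ, g (i + n) := by
            field_simp
  -- tail tends to 0
  have htail : Filter.Tendsto (fun n : ℕ => (1/8 : ℝ) * ∑' i : ℕ, g (i + n))
      Filter.atTop (nhds 0) := by
    have := tendsto_sum_nat_add g
    simpa using (this.const_mul (1/8 : ℝ))
  have hle : ‖T x - T' x‖ ≤ 0 :=
    le_of_tendsto_of_tendsto' tendsto_const_nhds htail hbound
  exact sub_eq_zero.mp (norm_le_zero_iff.mp hle)
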